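/- The weak global dimension of R is at most 1 if and only if the flat-precover completing domain of every left R-module is closed under submodules. -/

import Mathlib

open CategoryTheory

universe u

variable {R : Type u} [Ring R]

/-- The submodule of relations defining the balanced tensor product `W ⊗_R M` of a
right `R`-module `W` and a left `R`-module `M` as a quotient of `W ⊗_ℤ M`. -/
abbrev tensorRel (W : Type u) [AddCommGroup W] [Module Rᵐᵒᵖ W]
    (M : Type u) [AddCommGroup M] [Module R M] : Submodule ℤ (TensorProduct ℤ W M) :=
  Submodule.span ℤ
    {x | ∃ (w : W) (r : R) (m : M), x = (MulOpposite.op r • w) ⊗ₜ[ℤ] m - w ⊗ₜ[ℤ] (r • m)}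

/-- The balanced tensor product `W ⊗_R M` over the (possibly noncommutative) ring `R`. -/
abbrev RTensor (W : Type u) [AddCommGroup W] [Module Rᵐᵒᵖ W]
    (M : Type u) [AddCommGroup M] [Module R M] : Type u :=
  TensorProduct ℤ W M ⧸ tensorRel (R := R) W M

/-- The map `W ⊗_R M → K ⊗_R M` induced by a morphism `i : W → K` of right
`R`-modules. -/
noncomputable def tensorMap {W K : Type u} [AddCommGroup W] [Module Rᵐᵒᵖ W]
    [AddCommGroup K] [Module Rᵐᵒᵖ K] (i : W →ₗ[Rᵐᵒᵖ] K)
    (M : Type u) [AddCommGroup M] [Module R M] :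
    RTensor (R := R) W M →ₗ[ℤ] RTensor (R := R) K M :=
  Submodule.mapQ _ _ (LinearMap.rTensor M i.toAddMonoidHom.toIntLinearMap) (by
    refine Submodule.span_le.2 ?_
    rintro x ⟨w, r, m, rfl⟩
    refine Submodule.mem_comap.2 (Submodule.subset_span ?_)
    refine ⟨i w, r, m, ?_⟩
    exact (map_sub (LinearMap.rTensor M i.toAddMonoidHom.toIntLinearMap) _ _).trans
      (by simp [LinearMap.rTensor_tmul, map_smul]))

/-- `M` is a flat left `R`-module: tensoring with `M` preserves injectivity of
morphisms of right `R`-modules. -/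
def IsFlat (M : Type u) [AddCommGroup M] [Module R M] : Prop :=
  ∀ (W K : Type u) [AddCommGroup W] [Module Rᵐᵒᵖ W] [AddCommGroup K] [Module Rᵐᵒᵖ K]
    (i : W →ₗ[Rᵐᵒᵖ] K), Function.Injective i → Function.Injective (tensorMap (R := R) i M)

/-- `N` belongs to the flat-precover completing domain `𝔉⁻¹(M)` of `M`:
every morphism `M ⟶ N` factors through a flat module. -/
def FlatDom (M N : ModuleCat.{u} R) : Prop :=
  ∀ f : M ⟶ N, ∃ (F : ModuleCat.{u} R) (h : M ⟶ F) (k : F ⟶ N),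
    IsFlat (R := R) ↥F ∧ h ≫ k = f


/-- Functoriality of the balanced tensor product in the second variable. -/
noncomputable def lmap (W : Type u) [AddCommGroup W] [Module Rᵐᵒᵖ W]
    {M M' : Type u} [AddCommGroup M] [Module R M] [AddCommGroup M'] [Module R M']
    (f : M →ₗ[R] M') :
    RTensor (R := R) W M →ₗ[ℤ] RTensor (R := R) W M' :=
  Submodule.mapQ _ _ (LinearMap.lTensor W f.toAddMonoidHom.toIntLinearMap) (by
    refine Submodule.span_le.2 ?_
    rintro x ⟨w, r, m, rfl⟩
    refine Submodule.mem_comap.2 (Submodule.subset_span ⟨w, r, f m, ?_⟩)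
    exact (map_sub (LinearMap.lTensor W f.toAddMonoidHom.toIntLinearMap) _ _).trans
      (by simp [LinearMap.lTensor_tmul, map_smul]))

lemma lmap_naturality {W K : Type u} [AddCommGroup W] [Module Rᵐᵒᵖ W]
    [AddCommGroup K] [Module Rᵐᵒᵖ K] (i : W →ₗ[Rᵐᵒᵖ] K)
    {M M' : Type u} [AddCommGroup M] [Module R M] [AddCommGroup M'] [Module R M']
    (f : M →ₗ[R] M') (x : RTensor (R := R) W M) :
    tensorMap (R := R) i M' (lmap (R := R) W f x) =
      lmap (R := R) K f (tensorMap (R := R) i M x) := by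
  obtain ⟨y, rfl⟩ := Submodule.Quotient.mk_surjective _ x
  show Submodule.Quotient.mk _ = Submodule.Quotient.mk _
  congr 1
  exact LinearMap.congr_fun ((LinearMap.rTensor_comp_lTensor
    (f := i.toAddMonoidHom.toIntLinearMap) (g := f.toAddMonoidHom.toIntLinearMap)).trans
    (LinearMap.lTensor_comp_rTensor (f := i.toAddMonoidHom.toIntLinearMap)
      (g := f.toAddMonoidHom.toIntLinearMap)).symm) y

lemma lmap_comp_eq_id (W : Type u) [AddCommGroup W] [Module Rᵐᵒᵖ W]
    {A B : Type u} [AddCommGroup A] [Module R A] [AddCommGroup B] [Module R B]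
    (h : A →ₗ[R] B) (k : B →ₗ[R] A) (hk : ∀ a, k (h a) = a)
    (x : RTensor (R := R) W A) : lmap (R := R) W k (lmap (R := R) W h x) = x := by
  obtain ⟨y, rfl⟩ := Submodule.Quotient.mk_surjective _ x
  show Submodule.Quotient.mk _ = Submodule.Quotient.mk _
  congr 1
  refine (LinearMap.congr_fun (LinearMap.lTensor_comp (M := W) (g := k.toAddMonoidHom.toIntLinearMap)
    (f := h.toAddMonoidHom.toIntLinearMap)) y).symm.trans ?_
  have : k.toAddMonoidHom.toIntLinearMap ∘ₗ h.toAddMonoidHom.toIntLinearMap =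
      LinearMap.id := by ext a; exact hk a
  rw [this, LinearMap.lTensor_id, LinearMap.id_apply]

/-- A retract of a flat module is flat. -/
lemma isFlat_of_retract {A B : Type u} [AddCommGroup A] [Module R A]
    [AddCommGroup B] [Module R B] (h : A →ₗ[R] B) (k : B →ₗ[R] A)
    (hk : ∀ a, k (h a) = a) (hB : IsFlat (R := R) B) : IsFlat (R := R) A := by
  intro W K _ _ _ _ i hi x y hxy
  have h1 : tensorMap (R := R) i B (lmap (R := R) W h x) =
      tensorMap (R := R) i B (lmap (R := R) W h y) := by
    rw [lmap_naturality, lmap_naturality, hxy]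
  have h2 := hB W K i hi h1
  calc x = lmap (R := R) W k (lmap (R := R) W h x) := (lmap_comp_eq_id W h k hk x).symm
    _ = lmap (R := R) W k (lmap (R := R) W h y) := by rw [h2]
    _ = y := lmap_comp_eq_id W h k hk y

theorem stmt_16 :
    (∀ F : ModuleCat.{u} R, IsFlat (R := R) ↥F →
        ∀ K : Submodule R ↥F, IsFlat (R := R) ↥K) ↔
      ∀ M N : ModuleCat.{u} R, FlatDom M N →
        ∀ K : Submodule R ↥N, FlatDom M (ModuleCat.of R ↥K) := by
  constructor
  · -- submodules of flat are flat → FlatDom closed under submodules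
    intro hsub M N hMN K f
    obtain ⟨F, h, k, hF, hcomp⟩ := hMN (f ≫ ModuleCat.ofHom K.subtype)
    set K' : Submodule R ↥F := K.comap k.hom with hK'def
    have hflat : IsFlat (R := R) ↥K' := hsub F hF K'
    have hmem : ∀ m : ↥M, h.hom m ∈ K' := by
      intro m
      have := congr_arg (fun g => ModuleCat.Hom.hom g m) hcomp
      simp only [ModuleCat.hom_comp, ModuleCat.hom_ofHom, LinearMap.comp_apply,
        Submodule.subtype_apply] at this
      show k.hom (h.hom m) ∈ K
      rw [this]
      exact (f.hom m).2
    refine ⟨ModuleCat.of R ↥K', ModuleCat.ofHom (h.hom.codRestrict K' hmem),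
      ModuleCat.ofHom (k.hom.restrict (fun x hx => hx)), hflat, ?_⟩
    apply ModuleCat.hom_ext
    apply LinearMap.ext
    intro m
    apply Subtype.ext
    have := congr_arg (fun g => ModuleCat.Hom.hom g m) hcomp
    simp only [ModuleCat.hom_comp, ModuleCat.hom_ofHom, LinearMap.comp_apply,
      LinearMap.restrict_apply, LinearMap.codRestrict_apply, Submodule.subtype_apply] at this ⊢
    exact this
  · -- FlatDom closed under submodules → submodules of flat are flat
    intro hdom F hF K
    have h1 : FlatDom (ModuleCat.of R ↥K) F := fun g => ⟨F, g, 𝟙 F, hF, Category.comp_id g⟩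
    have h2 : FlatDom (ModuleCat.of R ↥K) (ModuleCat.of R ↥K) := hdom _ F h1 K
    obtain ⟨F', h, k, hF', hcomp⟩ := h2 (𝟙 _)
    exact isFlat_of_retract (A := ↥K) h.hom k.hom
      (fun a => congr_arg (fun g => ModuleCat.Hom.hom g a) hcomp) hF'
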